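/- Consider the homoscedastic linear location model Q_τ(Yᵢ | xᵢ, θ) = xᵢᵀβ + σ·F⁻¹(τ) with random (β, σ), with intercept x_{i1} = 1 for all i, and X of full column rank. Then the optimal action δ̂ = (XᵀX)⁻¹XᵀE[Q_τ] satisfies δ̂₁ = E[β₁ + σF⁻¹(τ)] and δ̂ⱼ = E[βⱼ] for j = 2,…,p. In particular, for j ≥ 2 the coefficients δ̂ⱼ do not depend on τ. -/
import Mathlib


open MeasureTheory Matrix

/-- Corollary 1: for the homoscedastic linear model with quantiles
`Q_τ(Yᵢ|xᵢ,θ) = xᵢᵀβ + σF⁻¹(τ)` and intercept `x_{i1} = 1`, the optimal linear action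
is the posterior mean of the coefficients with a quantile-specific intercept shift;
the non-intercept coefficients do not depend on τ. -/
theorem stmt_6 {Ω : Type*} [MeasurableSpace Ω] (μ : Measure Ω) [IsProbabilityMeasure μ]
    {n p : ℕ} [NeZero p] (β : Ω → Fin p → ℝ) (σ : Ω → ℝ)
    (hβ : ∀ j, Integrable (fun ω => β ω j) μ) (hσ : Integrable σ μ)
    (X : Matrix (Fin n) (Fin p) ℝ) (hX : IsUnit (Xᵀ * X).det)
    (hint : ∀ i, X i 0 = 1)
    (Finvτ : ℝ)
    (Qτ : Ω → Fin n → ℝ) (hQτ : ∀ ω i, Qτ ω i = X.mulVec (β ω) i + σ ω * Finvτ)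
    (δhat : Fin p → ℝ)
    (hδhat : δhat = (Xᵀ * X)⁻¹.mulVec (Xᵀ.mulVec (fun i => ∫ ω, Qτ ω i ∂μ))) :
    δhat 0 = ∫ ω, (β ω 0 + σ ω * Finvτ) ∂μ ∧
      ∀ j : Fin p, j ≠ 0 → δhat j = ∫ ω, β ω j ∂μ := by
  set v : Fin p → ℝ := fun j => (∫ ω, β ω j ∂μ) + (if j = 0 then (∫ ω, σ ω ∂μ) * Finvτ else 0)
    with hv
  have hσint : ∫ ω, σ ω * Finvτ ∂μ = (∫ ω, σ ω ∂μ) * Finvτ := integral_mul_const _ _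
  have hEQ : (fun i => ∫ ω, Qτ ω i ∂μ) = X.mulVec v := by
    funext i
    have : ∀ ω, Qτ ω i = (∑ j, X i j * β ω j) + σ ω * Finvτ := by
      intro ω; rw [hQτ]; rfl
    simp_rw [this]
    rw [integral_add (integrable_finset_sum _ (fun j _ => (hβ j).const_mul (X i j)))
      (hσ.mul_const _)]
    rw [integral_finset_sum _ (fun j _ => (hβ j).const_mul (X i j)), hσint]
    simp_rw [integral_const_mul]
    show _ = ∑ j, X i j * v j
    rw [hv]
    simp only [mul_add, Finset.sum_add_distrib]
    congr 1
    simp_rw [mul_ite, mul_zero]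
    rw [Finset.sum_ite_eq' Finset.univ (0 : Fin p)]
    simp [hint i]
  have hδ : δhat = v := by
    rw [hδhat, hEQ, mulVec_mulVec, mulVec_mulVec, Matrix.mul_assoc,
      Matrix.nonsing_inv_mul _ hX, one_mulVec]
  constructor
  · rw [hδ, hv]
    rw [integral_add (hβ 0) (hσ.mul_const _), hσint]
    simp
  · intro j hj
    rw [hδ, hv]
    simp [hj]
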